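/- Let b = (L, β, τ) be a bicellular map with faces ω₁ and ω₂ as cycles of β∘τ. Then the condition that there exists x in ω₁ with β(x) in ω₂ is equivalent to the underlying graph (vertices = cycles of τ, edges = cycles of β) being connected, given that each face alone would otherwise correspond to a connected component. -/

import Mathlib

/-- The combinatorial data of a planted bicellular map with `n` edges, without the
crossing-edge requirement (which is the condition characterised in the statement) and
without the genus datum.  The `2n+4` half-edges are `Fin (2*n+4)` in boundary order
(index `0` is `1_R`, indices `1,…,m` the half-edges of `ω₁`, index `m+1` the plant
`m_R`, index `m+2` is `(m+1)_R`, indices `m+3,…,2n+2` the half-edges of `ω₂`, and index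
`2n+3` the plant `2n_R`).  `β` is a fixed-point-free involution containing the rainbows
`(1_R, m_R)` and `((m+1)_R, 2n_R)`, and the face permutation `β ∘ τ` consists of exactly
the two cycles `ω₁ = (1_R, 1, …, m, m_R)` and `ω₂ = ((m+1)_R, m+1, …, 2n, 2n_R)`. -/
structure BicellData (n : ℕ) where
  m : ℕ
  hm1 : 0 < m
  hm2 : m < 2 * n
  β : Equiv.Perm (Fin (2 * n + 4))
  τ : Equiv.Perm (Fin (2 * n + 4))
  hinv : ∀ x, β (β x) = x
  hfpf : ∀ x, β x ≠ x
  hr1 : β ⟨0, by omega⟩ = ⟨m + 1, by omega⟩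
  hr2 : β ⟨m + 2, by omega⟩ = ⟨2 * n + 3, by omega⟩
  hface : ∀ x : Fin (2 * n + 4),
    ((β * τ) x : ℕ) = if (x : ℕ) = m + 1 then 0
      else if (x : ℕ) = 2 * n + 3 then m + 2 else (x : ℕ) + 1

/-- For bicellular map data `b = (L, β, τ)` with faces `ω₁` (the
half-edges of index `< m+2`) and `ω₂` (the rest), the condition that there exists
`x ∈ ω₁` with `β x ∈ ω₂` is equivalent to the connectivity of the underlying graph
(vertices = cycles of `τ`, edges = cycles of `β`), expressed as transitivity of the
action of the subgroup generated by `β` and `τ` on the half-edges — without a crossing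
edge, each face alone would correspond to a connected component. -/
theorem stmt13 (n : ℕ) (b : BicellData n) :
    (∃ x : Fin (2 * n + 4), (x : ℕ) < b.m + 2 ∧ b.m + 2 ≤ (b.β x : ℕ)) ↔
    (∀ x y : Fin (2 * n + 4),
      ∃ p ∈ Subgroup.closure ({b.β, b.τ} : Set (Equiv.Perm (Fin (2 * n + 4)))),
        p x = y) := by
  set G := Subgroup.closure ({b.β, b.τ} : Set (Equiv.Perm (Fin (2 * n + 4)))) with hG
  have hβG : b.β ∈ G := Subgroup.subset_closure (by simp)
  have hτG : b.τ ∈ G := Subgroup.subset_closure (by simp)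
  set F := b.β * b.τ with hF
  have hFG : F ∈ G := mul_mem hβG hτG
  have hm2 := b.hm2
  have hm1 := b.hm1
  -- iterating the face permutation within ω₁
  have lemA : ∀ (k : ℕ) (x : Fin (2 * n + 4)), (x : ℕ) + k ≤ b.m + 1 →
      (((F ^ k) x : ℕ)) = (x : ℕ) + k := by
    intro k
    induction k with
    | zero => intro x _; simp
    | succ k ih =>
      intro x hx
      have h1 : ((F x : ℕ)) = (x : ℕ) + 1 := by
        rw [b.hface x, if_neg (by omega), if_neg (by omega)]
      have h2 : (F ^ (k + 1)) x = (F ^ k) (F x) := by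
        rw [pow_succ, Equiv.Perm.mul_apply]
      rw [h2, ih (F x) (by omega), h1]
      omega
  -- iterating the face permutation within ω₂
  have lemB : ∀ (k : ℕ) (x : Fin (2 * n + 4)), b.m + 2 ≤ (x : ℕ) →
      (x : ℕ) + k ≤ 2 * n + 3 → (((F ^ k) x : ℕ)) = (x : ℕ) + k := by
    intro k
    induction k with
    | zero => intro x _ _; simp
    | succ k ih =>
      intro x hx hx'
      have h1 : ((F x : ℕ)) = (x : ℕ) + 1 := by
        rw [b.hface x, if_neg (by omega), if_neg (by omega)]
      have h2 : (F ^ (k + 1)) x = (F ^ k) (F x) := by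
        rw [pow_succ, Equiv.Perm.mul_apply]
      rw [h2, ih (F x) (by omega) (by omega), h1]
      omega
  -- from any point of ω₁ we reach the point of value 0
  have reach0 : ∀ x : Fin (2 * n + 4), (x : ℕ) < b.m + 2 →
      (((F ^ (b.m + 2 - (x : ℕ))) x : ℕ)) = 0 := by
    intro x hx
    have hsplit : b.m + 2 - (x : ℕ) = (b.m + 1 - (x : ℕ)) + 1 := by omega
    have hA := lemA (b.m + 1 - (x : ℕ)) x (by omega)
    rw [hsplit, pow_succ', Equiv.Perm.mul_apply, b.hface, if_pos (by omega)]
  -- from any point of ω₂ we reach the point of value m+2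
  have reachM : ∀ x : Fin (2 * n + 4), b.m + 2 ≤ (x : ℕ) →
      (((F ^ (2 * n + 4 - (x : ℕ))) x : ℕ)) = b.m + 2 := by
    intro x hx
    have hlt := x.isLt
    have hsplit : 2 * n + 4 - (x : ℕ) = (2 * n + 3 - (x : ℕ)) + 1 := by omega
    have hB := lemB (2 * n + 3 - (x : ℕ)) x hx (by omega)
    rw [hsplit, pow_succ', Equiv.Perm.mul_apply, b.hface, if_neg (by omega),
      if_pos (by omega)]
  -- connectivity within ω₁
  have conn₁ : ∀ x y : Fin (2 * n + 4), (x : ℕ) < b.m + 2 → (y : ℕ) < b.m + 2 →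
      ∃ p ∈ G, p x = y := by
    intro x y hx hy
    refine ⟨F ^ (y : ℕ) * F ^ (b.m + 2 - (x : ℕ)), mul_mem (pow_mem hFG _) (pow_mem hFG _), ?_⟩
    have h0 := reach0 x hx
    have hA := lemA (y : ℕ) ((F ^ (b.m + 2 - (x : ℕ))) x) (by omega)
    apply Fin.ext
    rw [Equiv.Perm.mul_apply, hA, h0]
    omega
  -- connectivity within ω₂
  have conn₂ : ∀ x y : Fin (2 * n + 4), b.m + 2 ≤ (x : ℕ) → b.m + 2 ≤ (y : ℕ) →
      ∃ p ∈ G, p x = y := by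
    intro x y hx hy
    have hlt := y.isLt
    refine ⟨F ^ ((y : ℕ) - (b.m + 2)) * F ^ (2 * n + 4 - (x : ℕ)),
      mul_mem (pow_mem hFG _) (pow_mem hFG _), ?_⟩
    have h0 := reachM x hx
    have hB := lemB ((y : ℕ) - (b.m + 2)) ((F ^ (2 * n + 4 - (x : ℕ))) x)
      (by omega) (by omega)
    apply Fin.ext
    rw [Equiv.Perm.mul_apply, hB, h0]
    omega
  constructor
  · -- crossing edge → transitive
    rintro ⟨x₀, hx₀, hβx₀⟩
    have key : ∀ z : Fin (2 * n + 4), ∃ p ∈ G, p z = x₀ := by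
      intro z
      by_cases hz : (z : ℕ) < b.m + 2
      · exact conn₁ z x₀ hz hx₀
      · obtain ⟨p, hp, hpz⟩ := conn₂ z (b.β x₀) (by omega) hβx₀
        refine ⟨b.β * p, mul_mem hβG hp, ?_⟩
        rw [Equiv.Perm.mul_apply, hpz, b.hinv]
    intro x y
    obtain ⟨p, hp, hpx⟩ := key x
    obtain ⟨q, hq, hqy⟩ := key y
    refine ⟨q⁻¹ * p, mul_mem (inv_mem hq) hp, ?_⟩
    rw [Equiv.Perm.mul_apply, hpx, ← hqy, Equiv.Perm.inv_def, Equiv.symm_apply_apply]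
  · -- transitive → crossing edge
    intro htrans
    by_contra hno
    push_neg at hno
    -- β preserves ω₁
    have hβP : ∀ x : Fin (2 * n + 4), (x : ℕ) < b.m + 2 → ((b.β x : ℕ)) < b.m + 2 := by
      intro x hx
      have := hno x hx
      omega
    -- invariance of ω₁ under the whole group
    have key : ∀ p ∈ G, ∀ x : Fin (2 * n + 4),
        ((x : ℕ) < b.m + 2 ↔ ((p x : ℕ)) < b.m + 2) := by
      intro p hp
      have hβiff : ∀ x : Fin (2 * n + 4), ((x : ℕ) < b.m + 2 ↔ ((b.β x : ℕ)) < b.m + 2) := by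
        intro x
        constructor
        · exact hβP x
        · intro h
          have := hβP (b.β x) h
          rwa [b.hinv] at this
      have hFiff : ∀ x : Fin (2 * n + 4), ((x : ℕ) < b.m + 2 ↔ ((F x : ℕ)) < b.m + 2) := by
        intro x
        rw [hF, b.hface]
        constructor
        · intro h
          split_ifs <;> omega
        · intro h
          by_contra hc
          rw [if_neg (by omega)] at h
          split_ifs at h <;> omega
      have hτiff : ∀ x : Fin (2 * n + 4), ((x : ℕ) < b.m + 2 ↔ ((b.τ x : ℕ)) < b.m + 2) := by
        intro x
        have hτ : b.τ x = b.β (F x) := by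
          rw [hF, Equiv.Perm.mul_apply, b.hinv]
        rw [hτ]
        exact (hFiff x).trans (hβiff (F x))
      induction hp using Subgroup.closure_induction with
      | mem q hq =>
        rcases hq with hq | hq
        · subst hq; exact hβiff
        · simp only [Set.mem_singleton_iff] at hq
          subst hq; exact hτiff
      | one => intro x; simp
      | mul q r hq hr ihq ihr =>
        intro x
        rw [Equiv.Perm.mul_apply]
        exact (ihr x).trans (ihq (r x))
      | inv q hq ihq =>
        intro x
        have := ihq (q⁻¹ x)
        rw [Equiv.Perm.inv_def, Equiv.apply_symm_apply] at this
        exact this.symm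
    obtain ⟨p, hp, hpx⟩ := htrans ⟨0, by omega⟩ ⟨b.m + 2, by omega⟩
    have := (key p hp ⟨0, by omega⟩).mp (by simp)
    rw [hpx] at this
    simp at this
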